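/- Let G be a graph of order n and H a graph whose maximum degree is at most its order minus two. Then γ_oidR(G ⊙ H) equals the minimum, over all partitions (V_0, V_1, V_2, V_3) of V(G) with V_0 independent, of |V_0|(n(H) + γ(H)) + |V_1|(γ_oidR(H) + 1) + |V_2|(γ_oiR(H) + 2) + |V_3|(β(H) + 3). -/

import Mathlib

open SimpleGraph Finset

/-- Outer independent double Roman dominating function. -/
def IsOIDRDF {V : Type*} (G : SimpleGraph V) (f : V → ℕ) : Prop :=
  (∀ v, f v ≤ 3) ∧
  (∀ v, f v = 0 → (∃ u, G.Adj v u ∧ f u = 3) ∨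
    (∃ u w, u ≠ w ∧ G.Adj v u ∧ G.Adj v w ∧ f u = 2 ∧ f w = 2)) ∧
  (∀ v, f v = 1 → ∃ u, G.Adj v u ∧ 2 ≤ f u) ∧
  (∀ u v, G.Adj u v → f u = 0 → f v ≠ 0)

/-- Outer independent double Roman domination number. -/
noncomputable def oidRNum {V : Type*} (G : SimpleGraph V) [Fintype V] : ℕ :=
  sInf {w | ∃ f : V → ℕ, IsOIDRDF G f ∧ w = ∑ v, f v}

/-- Outer independent Roman dominating function. -/
def IsOIRDF {V : Type*} (G : SimpleGraph V) (f : V → ℕ) : Prop :=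
  (∀ v, f v ≤ 2) ∧
  (∀ v, f v = 0 → ∃ u, G.Adj v u ∧ f u = 2) ∧
  (∀ u v, G.Adj u v → f u = 0 → f v ≠ 0)

/-- Outer independent Roman domination number. -/
noncomputable def oiRNum {V : Type*} (G : SimpleGraph V) [Fintype V] : ℕ :=
  sInf {w | ∃ f : V → ℕ, IsOIRDF G f ∧ w = ∑ v, f v}

/-- Vertex cover number. -/
noncomputable def coverNum {V : Type*} (G : SimpleGraph V) [Fintype V] : ℕ :=
  sInf {k | ∃ S : Finset V, S.card = k ∧ ∀ u v, G.Adj u v → u ∈ S ∨ v ∈ S}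

/-- Domination number. -/
noncomputable def domNum {V : Type*} (G : SimpleGraph V) [Fintype V] : ℕ :=
  sInf {k | ∃ S : Finset V, S.card = k ∧ ∀ v, v ∉ S → ∃ u ∈ S, G.Adj v u}

/-- Independence number. -/
noncomputable def indNum {V : Type*} (G : SimpleGraph V) [Fintype V] : ℕ :=
  sSup {k | ∃ S : Finset V, S.card = k ∧ ∀ u ∈ S, ∀ v ∈ S, ¬ G.Adj u v}

/-- Maximum degree. -/
noncomputable def maxDeg {V : Type*} (G : SimpleGraph V) [Fintype V] : ℕ :=
  sSup (Set.range fun v => Nat.card {u | G.Adj v u})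

/-- Underlying relation for the corona product. -/
def coronaRel {V W : Type*} (G : SimpleGraph V) (H : SimpleGraph W) :
    (V ⊕ V × W) → (V ⊕ V × W) → Prop
  | Sum.inl u, Sum.inl v => G.Adj u v
  | Sum.inl u, Sum.inr p => u = p.1
  | Sum.inr p, Sum.inl u => u = p.1
  | Sum.inr p, Sum.inr q => p.1 = q.1 ∧ H.Adj p.2 q.2

/-- The corona product `G ⊙ H`. -/
def corona {V W : Type*} (G : SimpleGraph V) (H : SimpleGraph W) :
    SimpleGraph (V ⊕ V × W) :=
  SimpleGraph.fromRel (coronaRel G H)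

section Aux

variable {V W : Type*}

lemma corona_adj_inl_inl (G : SimpleGraph V) (H : SimpleGraph W) {u v : V} :
    (corona G H).Adj (Sum.inl u) (Sum.inl v) ↔ G.Adj u v := by
  constructor
  · rintro ⟨-, h | h⟩
    · exact h
    · exact h.symm
  · intro h
    exact ⟨by simp [G.ne_of_adj h], Or.inl h⟩

lemma corona_adj_inl_inr (G : SimpleGraph V) (H : SimpleGraph W) {u : V} {p : V × W} :
    (corona G H).Adj (Sum.inl u) (Sum.inr p) ↔ u = p.1 := by
  constructor
  · rintro ⟨-, h | h⟩ <;> exact h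
  · intro h; exact ⟨by simp, Or.inl h⟩

lemma corona_adj_inr_inr (G : SimpleGraph V) (H : SimpleGraph W) {p q : V × W} :
    (corona G H).Adj (Sum.inr p) (Sum.inr q) ↔ p.1 = q.1 ∧ H.Adj p.2 q.2 := by
  constructor
  · rintro ⟨-, ⟨h1, h2⟩ | ⟨h1, h2⟩⟩
    · exact ⟨h1, h2⟩
    · exact ⟨h1.symm, h2.symm⟩
  · rintro ⟨h1, h2⟩
    refine ⟨?_, Or.inl ⟨h1, h2⟩⟩
    simp only [ne_eq, Sum.inr.injEq]
    intro h; rw [h] at h2; exact H.irrefl h2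

lemma corona_adj_inr (G : SimpleGraph V) (H : SimpleGraph W) {v : V} {w : W}
    {y : V ⊕ V × W} (h : (corona G H).Adj (Sum.inr (v, w)) y) :
    y = Sum.inl v ∨ ∃ u : W, y = Sum.inr (v, u) ∧ H.Adj w u := by
  match y with
  | Sum.inl x =>
    left
    have := ((corona G H).adj_symm h)
    rw [corona_adj_inl_inr] at this
    simp [this]
  | Sum.inr q =>
    right
    rw [corona_adj_inr_inr] at h
    exact ⟨q.2, by rw [show q = (v, q.2) from Prod.ext h.1.symm rfl], h.2⟩

variable [Fintype V] [Fintype W]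

lemma exists_oidr (G : SimpleGraph V) :
    ∃ f : V → ℕ, IsOIDRDF G f ∧ oidRNum G = ∑ v, f v := by
  have hne : {w | ∃ f : V → ℕ, IsOIDRDF G f ∧ w = ∑ v, f v}.Nonempty := by
    refine ⟨∑ _v : V, (2:ℕ), fun _ => 2, ⟨fun v => by norm_num, ?_, ?_, ?_⟩, rfl⟩ <;>
      intros <;> simp_all
  exact Nat.sInf_mem hne

lemma oidRNum_le (G : SimpleGraph V) {f : V → ℕ} (hf : IsOIDRDF G f) :
    oidRNum G ≤ ∑ v, f v := Nat.sInf_le ⟨f, hf, rfl⟩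

lemma exists_oir (G : SimpleGraph V) :
    ∃ f : V → ℕ, IsOIRDF G f ∧ oiRNum G = ∑ v, f v := by
  have hne : {w | ∃ f : V → ℕ, IsOIRDF G f ∧ w = ∑ v, f v}.Nonempty := by
    refine ⟨∑ _v : V, (2:ℕ), fun _ => 2, ⟨fun v => by norm_num, ?_, ?_⟩, rfl⟩ <;>
      intros <;> simp_all
  exact Nat.sInf_mem hne

lemma oiRNum_le (G : SimpleGraph V) {f : V → ℕ} (hf : IsOIRDF G f) :
    oiRNum G ≤ ∑ v, f v := Nat.sInf_le ⟨f, hf, rfl⟩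

lemma exists_cover (G : SimpleGraph V) :
    ∃ S : Finset V, S.card = coverNum G ∧ ∀ u v, G.Adj u v → u ∈ S ∨ v ∈ S := by
  have hne : {k | ∃ S : Finset V, S.card = k ∧ ∀ u v, G.Adj u v → u ∈ S ∨ v ∈ S}.Nonempty :=
    ⟨(Finset.univ : Finset V).card, Finset.univ, rfl, fun u v _ => Or.inl (Finset.mem_univ u)⟩
  obtain ⟨S, h1, h2⟩ := Nat.sInf_mem hne
  exact ⟨S, h1, h2⟩

lemma coverNum_le (G : SimpleGraph V) {S : Finset V}
    (hS : ∀ u v, G.Adj u v → u ∈ S ∨ v ∈ S) : coverNum G ≤ S.card :=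
  Nat.sInf_le ⟨S, rfl, hS⟩

lemma exists_dom (G : SimpleGraph V) :
    ∃ S : Finset V, S.card = domNum G ∧ ∀ v, v ∉ S → ∃ u ∈ S, G.Adj v u := by
  have hne : {k | ∃ S : Finset V, S.card = k ∧ ∀ v, v ∉ S → ∃ u ∈ S, G.Adj v u}.Nonempty :=
    ⟨(Finset.univ : Finset V).card, Finset.univ, rfl, fun v hv => absurd (Finset.mem_univ v) hv⟩
  obtain ⟨S, h1, h2⟩ := Nat.sInf_mem hne
  exact ⟨S, h1, h2⟩

lemma domNum_le (G : SimpleGraph V) {S : Finset V}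
    (hS : ∀ v, v ∉ S → ∃ u ∈ S, G.Adj v u) : domNum G ≤ S.card :=
  Nat.sInf_le ⟨S, rfl, hS⟩

lemma sum_fin4 (g : V → Fin 4) (h : Fin 4 → ℕ) :
    ∑ v, h (g v) =
      (Finset.univ.filter (fun v => g v = 0)).card * h 0 +
      (Finset.univ.filter (fun v => g v = 1)).card * h 1 +
      (Finset.univ.filter (fun v => g v = 2)).card * h 2 +
      (Finset.univ.filter (fun v => g v = 3)).card * h 3 := by
  have key : ∑ v, h (g v) = ∑ a : Fin 4, ∑ v ∈ Finset.univ.filter (fun v => g v = a), h (g v) :=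
    (Finset.sum_fiberwise_of_maps_to (fun x _ => Finset.mem_univ (g x)) _).symm
  have inner : ∀ a : Fin 4, ∑ v ∈ Finset.univ.filter (fun v => g v = a), h (g v)
      = (Finset.univ.filter (fun v => g v = a)).card * h a := by
    intro a
    rw [Finset.sum_congr rfl (fun v hv => by rw [(Finset.mem_filter.mp hv).2]),
      Finset.sum_const, smul_eq_mul]
  rw [key, Fin.sum_univ_four, inner 0, inner 1, inner 2, inner 3]

end Aux
section Aux2
variable {V W : Type*} [Fintype V] [Fintype W]

lemma degree_le_maxDeg (G : SimpleGraph V) (v : V) :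
    Nat.card {u | G.Adj v u} ≤ maxDeg G :=
  le_csSup (Set.Finite.bddAbove (Set.finite_range _)) ⟨v, rfl⟩

lemma two_le_domNum (H : SimpleGraph W) (hH : maxDeg H + 2 ≤ Fintype.card W) :
    2 ≤ domNum H := by
  by_contra hlt
  push_neg at hlt
  obtain ⟨S, hcard, hdom⟩ := exists_dom H
  have hW : 0 < Fintype.card W := by omega
  obtain ⟨w0⟩ := Fintype.card_pos_iff.mp hW
  have hS1 : S.card ≤ 1 := by omega
  rcases Nat.le_one_iff_eq_zero_or_eq_one.mp hS1 with h0 | h1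
  · obtain ⟨u, hu, -⟩ := hdom w0 (by simp [Finset.card_eq_zero.mp h0])
    simp [Finset.card_eq_zero.mp h0] at hu
  · obtain ⟨u, hu⟩ := Finset.card_eq_one.mp h1
    have hadj : ∀ x, x ≠ u → H.Adj u x := by
      intro x hx
      obtain ⟨y, hy, hxy⟩ := hdom x (by simp [hu, hx])
      rw [hu, Finset.mem_singleton] at hy
      subst hy
      exact hxy.symm
    have hsub : ({u}ᶜ : Set W) ⊆ {x | H.Adj u x} := fun x hx => hadj x hx
    have h1' : Fintype.card W - 1 ≤ Nat.card {x | H.Adj u x} := by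
      rw [Nat.card_coe_set_eq]
      refine le_trans ?_ (Set.ncard_le_ncard hsub (Set.toFinite _))
      have := Set.ncard_add_ncard_compl ({u} : Set W)
      rw [Set.ncard_singleton] at this
      rw [Nat.card_eq_fintype_card] at this
      omega
    have := le_trans h1' (degree_le_maxDeg H u)
    omega


lemma oidr_has_big' (H : SimpleGraph W) (hW : Nonempty W) {f : W → ℕ}
    (hf : IsOIDRDF H f) : ∃ u, 2 ≤ f u := by
  obtain ⟨w0⟩ := hW
  obtain ⟨h3, h0, h1, -⟩ := hf
  match h : f w0 with
  | 0 =>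
    rcases h0 w0 h with ⟨u, -, hu⟩ | ⟨u, w, -, -, -, hu, -⟩
    · exact ⟨u, by omega⟩
    · exact ⟨u, by omega⟩
  | 1 => obtain ⟨u, -, hu⟩ := h1 w0 h; exact ⟨u, hu⟩
  | (n+2) => exact ⟨w0, by omega⟩

end Aux2
section Copy
set_option linter.unusedSectionVars false
variable {V W : Type*} [Fintype V] [Fintype W]
variable (G : SimpleGraph V) (H : SimpleGraph W)
variable {F : (V ⊕ V × W) → ℕ}

lemma copyB0 (hF : IsOIDRDF (corona G H) F) (v : V) (h0 : F (Sum.inl v) = 0) :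
    Fintype.card W + domNum H ≤ ∑ w, F (Sum.inr (v, w)) := by
  classical
  obtain ⟨hle, hz, ho, hind⟩ := hF
  have hpos : ∀ w : W, 1 ≤ F (Sum.inr (v, w)) := by
    intro w
    have hadj : (corona G H).Adj (Sum.inl v) (Sum.inr (v, w)) :=
      (corona_adj_inl_inr G H).mpr rfl
    have := hind _ _ hadj h0
    omega
  set S : Finset W := Finset.univ.filter (fun w => 2 ≤ F (Sum.inr (v, w))) with hS
  have hdom : ∀ w, w ∉ S → ∃ u ∈ S, H.Adj w u := by
    intro w hw
    have h1 : F (Sum.inr (v, w)) = 1 := by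
      simp only [hS, Finset.mem_filter, Finset.mem_univ, true_and] at hw
      have := hpos w; omega
    obtain ⟨y, hy, hy2⟩ := ho _ h1
    rcases corona_adj_inr G H hy with rfl | ⟨u, rfl, hadj⟩
    · omega
    · exact ⟨u, by simp [hS]; omega, hadj⟩
  have hd : domNum H ≤ S.card := domNum_le H hdom
  have key : ∑ w : W, (1 + if w ∈ S then 1 else 0) ≤ ∑ w : W, F (Sum.inr (v, w)) := by
    apply Finset.sum_le_sum
    intro w _
    by_cases hw : w ∈ S
    · simp only [hw, if_true]
      simp only [hS, Finset.mem_filter, Finset.mem_univ, true_and] at hw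
      omega
    · simp only [hw, if_false]
      have := hpos w; omega
  have hsum : ∑ w : W, (1 + if w ∈ S then (1:ℕ) else 0) = Fintype.card W + S.card := by
    rw [Finset.sum_add_distrib, Finset.sum_const, smul_eq_mul, mul_one,
      Finset.card_univ]
    congr 1
    simp [Finset.sum_ite_mem]
  omega

lemma copyB1 (hF : IsOIDRDF (corona G H) F) (v : V) (h1 : F (Sum.inl v) = 1) :
    oidRNum H ≤ ∑ w, F (Sum.inr (v, w)) := by
  obtain ⟨hle, hz, ho, hind⟩ := hF
  apply oidRNum_le
  refine ⟨fun w => hle _, ?_, ?_, ?_⟩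
  · intro w hw
    rcases hz _ hw with ⟨y, hy, hy3⟩ | ⟨y, y', hne, hy, hy', h2, h2'⟩
    · rcases corona_adj_inr G H hy with rfl | ⟨u, rfl, hadj⟩
      · omega
      · exact Or.inl ⟨u, hadj, hy3⟩
    · rcases corona_adj_inr G H hy with rfl | ⟨u, rfl, hadj⟩
      · omega
      rcases corona_adj_inr G H hy' with rfl | ⟨u', rfl, hadj'⟩
      · omega
      refine Or.inr ⟨u, u', ?_, hadj, hadj', h2, h2'⟩
      intro h; apply hne; rw [h]
  · intro w hw
    obtain ⟨y, hy, hy2⟩ := ho _ hw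
    rcases corona_adj_inr G H hy with rfl | ⟨u, rfl, hadj⟩
    · omega
    · exact ⟨u, hadj, hy2⟩
  · intro u w hadj
    exact hind _ _ ((corona_adj_inr_inr G H).mpr ⟨rfl, hadj⟩)

lemma copyB2 (hF : IsOIDRDF (corona G H) F) (v : V) (h2v : F (Sum.inl v) = 2) :
    oiRNum H ≤ ∑ w, F (Sum.inr (v, w)) := by
  obtain ⟨hle, hz, ho, hind⟩ := hF
  refine le_trans (oiRNum_le H (f := fun w => min (F (Sum.inr (v,w))) 2) ⟨?_, ?_, ?_⟩)
    (Finset.sum_le_sum fun w _ => min_le_left _ _)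
  · intro w; exact min_le_right _ _
  · intro w hw
    simp only at hw
    have hw0 : F (Sum.inr (v, w)) = 0 := by omega
    rcases hz _ hw0 with ⟨y, hy, hy3⟩ | ⟨y, y', hne, hy, hy', ha, hb⟩
    · rcases corona_adj_inr G H hy with rfl | ⟨u, rfl, hadj⟩
      · omega
      · exact ⟨u, hadj, by simp only; omega⟩
    · rcases corona_adj_inr G H hy with rfl | ⟨u, rfl, hadj⟩
      · rcases corona_adj_inr G H hy' with rfl | ⟨u', rfl, hadj'⟩
        · exact absurd rfl hne
        · exact ⟨u', hadj', by simp only; omega⟩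
      · exact ⟨u, hadj, by simp only; omega⟩
  · intro u w hadj hu
    simp only at hu ⊢
    have hu0 : F (Sum.inr (v, u)) = 0 := by omega
    have := hind (Sum.inr (v, u)) (Sum.inr (v, w)) ((corona_adj_inr_inr G H).mpr ⟨rfl, hadj⟩) hu0
    omega

lemma copyB3 (hF : IsOIDRDF (corona G H) F) (v : V) :
    coverNum H ≤ ∑ w, F (Sum.inr (v, w)) := by
  classical
  obtain ⟨-, -, -, hind⟩ := hF
  set C := Finset.univ.filter (fun w => F (Sum.inr (v, w)) ≠ 0) with hC
  have hcov : ∀ u w, H.Adj u w → u ∈ C ∨ w ∈ C := by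
    intro u w hadj
    by_cases hu : F (Sum.inr (v, u)) = 0
    · right
      have := hind (Sum.inr (v, u)) (Sum.inr (v, w)) ((corona_adj_inr_inr G H).mpr ⟨rfl, hadj⟩) hu
      simp [hC, this]
    · left; simp [hC, hu]
  refine le_trans (coverNum_le H hcov) ?_
  calc C.card = ∑ _w ∈ C, 1 := by simp
    _ ≤ ∑ w ∈ C, F (Sum.inr (v, w)) := Finset.sum_le_sum fun w hw => by
        simp only [hC, Finset.mem_filter, Finset.mem_univ, true_and] at hw; omega
    _ ≤ ∑ w, F (Sum.inr (v, w)) := Finset.sum_le_sum_of_subset (Finset.subset_univ C)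

end Copy
lemma fin4_cases (a : Fin 4) : a = 0 ∨ a = 1 ∨ a = 2 ∨ a = 3 := by
  revert a; decide

lemma fin4v0 : ((0 : Fin 4) : ℕ) = 0 := rfl
lemma fin4v1 : ((1 : Fin 4) : ℕ) = 1 := rfl
lemma fin4v2 : ((2 : Fin 4) : ℕ) = 2 := rfl
lemma fin4v3 : ((3 : Fin 4) : ℕ) = 3 := rfl
lemma fin4_val0 : ∀ a : Fin 4, (a : ℕ) = 0 → a = 0 := by decide
lemma fin4_val1 : ∀ a : Fin 4, (a : ℕ) = 1 → a = 1 := by decide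
lemma fin4_vne0 : ∀ a : Fin 4, a ≠ 0 → (a : ℕ) ≠ 0 := by decide

/-- The OIDRDF built on a corona from a labelling `g` of `V` and data on `H`. -/
def buildF {V W : Type*} [DecidableEq W] (g : V → Fin 4) (Sd C : Finset W)
    (f1 f2 : W → ℕ) : (V ⊕ V × W) → ℕ
  | Sum.inl v => (g v : ℕ)
  | Sum.inr (v, w) =>
    if g v = 0 then (if w ∈ Sd then 2 else 1)
    else if g v = 1 then f1 w
    else if g v = 2 then f2 w
    else (if w ∈ C then 1 else 0)

section DirA
variable {V W : Type*} [Fintype V] [Fintype W]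

lemma sum_ite_two_one [DecidableEq W] (S : Finset W) :
    ∑ w : W, (if w ∈ S then (2:ℕ) else 1) = Fintype.card W + S.card := by
  have h : ∀ w, (if w ∈ S then (2:ℕ) else 1) = 1 + (if w ∈ S then 1 else 0) := by
    intro w; split <;> rfl
  simp_rw [h]
  rw [Finset.sum_add_distrib, Finset.sum_const, smul_eq_mul, mul_one, Finset.card_univ]
  congr 1
  simp [Finset.sum_ite_mem]

lemma sum_ite_one_zero [DecidableEq W] (S : Finset W) :
    ∑ w : W, (if w ∈ S then (1:ℕ) else 0) = S.card := by
  simp [Finset.sum_ite_mem]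

lemma directionA (G : SimpleGraph V) (H : SimpleGraph W)
    (hH : maxDeg H + 2 ≤ Fintype.card W) (g : V → Fin 4)
    (hg : ∀ u v, G.Adj u v → g u = 0 → g v ≠ 0) :
    oidRNum (corona G H) ≤
      (Finset.univ.filter (fun v => g v = 0)).card * (Fintype.card W + domNum H)
      + (Finset.univ.filter (fun v => g v = 1)).card * (oidRNum H + 1)
      + (Finset.univ.filter (fun v => g v = 2)).card * (oiRNum H + 2)
      + (Finset.univ.filter (fun v => g v = 3)).card * (coverNum H + 3) := by
  classical
  obtain ⟨Sd, hSdcard, hSdom⟩ := exists_dom H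
  have hSd2 : 2 ≤ Sd.card := hSdcard ▸ two_le_domNum H hH
  obtain ⟨sa, hsa, sb, hsb, hsab⟩ := (Finset.one_lt_card (s := Sd)).mp (by omega)
  obtain ⟨f1, hf1, hsum1⟩ := exists_oidr H
  obtain ⟨f2, hf2, hsum2⟩ := exists_oir H
  obtain ⟨C, hCcard, hCcov⟩ := exists_cover H
  have hWne : Nonempty W := Fintype.card_pos_iff.mp (by omega)
  obtain ⟨ub, hub⟩ := oidr_has_big' H hWne hf1
  set F := buildF (W := W) g Sd C f1 f2 with hFdef
  have hFl : ∀ v, F (Sum.inl v) = (g v : ℕ) := fun v => rfl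
  have hFr0 : ∀ v w, g v = 0 → F (Sum.inr (v, w)) = (if w ∈ Sd then 2 else 1) := by
    intro v w h
    show (if g v = 0 then _ else _) = _
    rw [if_pos h]
  have hFr1 : ∀ v w, g v = 1 → F (Sum.inr (v, w)) = f1 w := by
    intro v w h
    show (if g v = 0 then _ else _) = _
    rw [if_neg (by rw [h]; decide), if_pos h]
  have hFr2 : ∀ v w, g v = 2 → F (Sum.inr (v, w)) = f2 w := by
    intro v w h
    show (if g v = 0 then _ else _) = _
    rw [if_neg (by rw [h]; decide), if_neg (by rw [h]; decide), if_pos h]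
  have hFr3 : ∀ v w, g v = 3 → F (Sum.inr (v, w)) = (if w ∈ C then 1 else 0) := by
    intro v w h
    show (if g v = 0 then _ else _) = _
    rw [if_neg (by rw [h]; decide), if_neg (by rw [h]; decide),
      if_neg (by rw [h]; decide)]
  -- F is an OIDRDF of the corona
  have hF : IsOIDRDF (corona G H) F := by
    refine ⟨?_, ?_, ?_, ?_⟩
    · rintro (v | ⟨v, w⟩)
      · rw [hFl]; exact Nat.lt_succ_iff.mp (g v).isLt
      · rcases fin4_cases (g v) with h | h | h | h
        · rw [hFr0 v w h]; split <;> omega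
        · rw [hFr1 v w h]; exact le_trans (hf1.1 w) (by omega)
        · rw [hFr2 v w h]; exact le_trans (hf2.1 w) (by omega)
        · rw [hFr3 v w h]; split <;> omega
    · rintro (v | ⟨v, w⟩) hx
      · rw [hFl] at hx
        have hg0 : g v = 0 := fin4_val0 _ hx
        refine Or.inr ⟨Sum.inr (v, sa), Sum.inr (v, sb), ?_, ?_, ?_, ?_, ?_⟩
        · simp only [ne_eq, Sum.inr.injEq, Prod.mk.injEq, true_and]
          exact fun h => hsab h
        · exact (corona_adj_inl_inr G H).mpr rfl
        · exact (corona_adj_inl_inr G H).mpr rfl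
        · rw [hFr0 v sa hg0, if_pos hsa]
        · rw [hFr0 v sb hg0, if_pos hsb]
      · rcases fin4_cases (g v) with h | h | h | h
        · rw [hFr0 v w h] at hx; split at hx <;> omega
        · rw [hFr1 v w h] at hx
          rcases hf1.2.1 w hx with ⟨u, hu, hu3⟩ | ⟨u, u', hne, hu, hu', ha, hb⟩
          · exact Or.inl ⟨Sum.inr (v, u), (corona_adj_inr_inr G H).mpr ⟨rfl, hu⟩,
              by rw [hFr1 v u h]; exact hu3⟩
          · refine Or.inr ⟨Sum.inr (v, u), Sum.inr (v, u'), ?_,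
              (corona_adj_inr_inr G H).mpr ⟨rfl, hu⟩,
              (corona_adj_inr_inr G H).mpr ⟨rfl, hu'⟩,
              by rw [hFr1 v u h]; exact ha, by rw [hFr1 v u' h]; exact hb⟩
            simp only [ne_eq, Sum.inr.injEq, Prod.mk.injEq, true_and]
            exact fun hc => hne hc
        · rw [hFr2 v w h] at hx
          obtain ⟨u, hu, hu2⟩ := hf2.2.1 w hx
          refine Or.inr ⟨Sum.inr (v, u), Sum.inl v, by simp,
            (corona_adj_inr_inr G H).mpr ⟨rfl, hu⟩,
            ((corona G H).adj_symm ((corona_adj_inl_inr G H).mpr rfl)),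
            by rw [hFr2 v u h]; exact hu2, by rw [hFl, h]; exact fin4v2⟩
        · rw [hFr3 v w h] at hx
          exact Or.inl ⟨Sum.inl v, (corona G H).adj_symm ((corona_adj_inl_inr G H).mpr rfl),
            by rw [hFl, h]; exact fin4v3⟩
    · rintro (v | ⟨v, w⟩) hx
      · rw [hFl] at hx
        have hg1 : g v = 1 := fin4_val1 _ hx
        exact ⟨Sum.inr (v, ub), (corona_adj_inl_inr G H).mpr rfl,
          by rw [hFr1 v ub hg1]; exact hub⟩
      · rcases fin4_cases (g v) with h | h | h | h
        · rw [hFr0 v w h] at hx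
          have hwS : w ∉ Sd := by intro hw; rw [if_pos hw] at hx; omega
          obtain ⟨u, hu, hadj⟩ := hSdom w hwS
          exact ⟨Sum.inr (v, u), (corona_adj_inr_inr G H).mpr ⟨rfl, hadj⟩,
            by rw [hFr0 v u h, if_pos hu]⟩
        · rw [hFr1 v w h] at hx
          obtain ⟨u, hu, hu2⟩ := hf1.2.2.1 w hx
          exact ⟨Sum.inr (v, u), (corona_adj_inr_inr G H).mpr ⟨rfl, hu⟩,
            by rw [hFr1 v u h]; exact hu2⟩
        · exact ⟨Sum.inl v, (corona G H).adj_symm ((corona_adj_inl_inr G H).mpr rfl),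
            by rw [hFl, h, fin4v2]⟩
        · exact ⟨Sum.inl v, (corona G H).adj_symm ((corona_adj_inl_inr G H).mpr rfl),
            by rw [hFl, h, fin4v3]; omega⟩
    · rintro (u | ⟨u, p⟩) (v | ⟨v, q⟩) hadj hx
      · rw [corona_adj_inl_inl] at hadj
        rw [hFl] at hx ⊢
        exact fin4_vne0 _ (hg u v hadj (fin4_val0 _ hx))
      · rw [corona_adj_inl_inr] at hadj
        rw [hFl] at hx
        have hg0 : g u = 0 := fin4_val0 _ hx
        simp only at hadj
        subst hadj
        rw [hFr0 u q hg0]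
        split <;> omega
      · have hadj' := (corona G H).adj_symm hadj
        rw [corona_adj_inl_inr] at hadj'
        simp only at hadj'
        subst hadj'
        rw [hFl]
        intro hv0
        have hg0 : g v = 0 := fin4_val0 _ hv0
        rw [hFr0 v p hg0] at hx
        split at hx <;> omega
      · rw [corona_adj_inr_inr] at hadj
        obtain ⟨h1, h2⟩ := hadj
        simp only at h1 h2
        subst h1
        rcases fin4_cases (g u) with h | h | h | h
        · rw [hFr0 u q h]
          rw [hFr0 u p h] at hx
          split at hx <;> omega
        · rw [hFr1 u q h]; rw [hFr1 u p h] at hx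
          exact hf1.2.2.2 p q h2 hx
        · rw [hFr2 u q h]; rw [hFr2 u p h] at hx
          exact hf2.2.2 p q h2 hx
        · rw [hFr3 u q h]; rw [hFr3 u p h] at hx
          have hp : p ∉ C := by intro hp; rw [if_pos hp] at hx; omega
          rcases hCcov p q h2 with hc | hc
          · exact absurd hc hp
          · rw [if_pos hc]; omega
  -- compute the weight of F
  have hweight : ∑ x, F x =
      (Finset.univ.filter (fun v => g v = 0)).card * (Fintype.card W + domNum H)
      + (Finset.univ.filter (fun v => g v = 1)).card * (oidRNum H + 1)
      + (Finset.univ.filter (fun v => g v = 2)).card * (oiRNum H + 2)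
      + (Finset.univ.filter (fun v => g v = 3)).card * (coverNum H + 3) := by
    set h : Fin 4 → ℕ :=
      ![Fintype.card W + domNum H, oidRNum H + 1, oiRNum H + 2, coverNum H + 3] with hhdef
    have hh0 : h 0 = Fintype.card W + domNum H := rfl
    have hh1 : h 1 = oidRNum H + 1 := rfl
    have hh2 : h 2 = oiRNum H + 2 := rfl
    have hh3 : h 3 = coverNum H + 3 := rfl
    have hper : ∀ v : V, (F (Sum.inl v) + ∑ w, F (Sum.inr (v, w))) = h (g v) := by
      intro v
      rw [hFl]
      rcases fin4_cases (g v) with hc | hc | hc | hc <;> rw [hc]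
      · rw [Finset.sum_congr rfl (fun w _ => hFr0 v w hc), hh0, fin4v0,
          sum_ite_two_one, hSdcard]
        omega
      · rw [Finset.sum_congr rfl (fun w _ => hFr1 v w hc), hh1, fin4v1, ← hsum1]
        omega
      · rw [Finset.sum_congr rfl (fun w _ => hFr2 v w hc), hh2, fin4v2, ← hsum2]
        omega
      · rw [Finset.sum_congr rfl (fun w _ => hFr3 v w hc), hh3, fin4v3,
          sum_ite_one_zero, hCcard]
        omega
    rw [Fintype.sum_sum_type, Fintype.sum_prod_type, ← Finset.sum_add_distrib]
    rw [Finset.sum_congr rfl (fun v _ => hper v), sum_fin4 g h, hh0, hh1, hh2, hh3]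
  exact hweight ▸ oidRNum_le (corona G H) hF
end DirA
theorem stmt18 {V W : Type*} [Fintype V] [Fintype W]
    (G : SimpleGraph V) (H : SimpleGraph W)
    (hH : maxDeg H + 2 ≤ Fintype.card W) :
    oidRNum (corona G H) =
      sInf {w | ∃ g : V → Fin 4,
        (∀ u v, G.Adj u v → g u = 0 → g v ≠ 0) ∧
        w = (Finset.univ.filter (fun v => g v = 0)).card * (Fintype.card W + domNum H)
          + (Finset.univ.filter (fun v => g v = 1)).card * (oidRNum H + 1)
          + (Finset.univ.filter (fun v => g v = 2)).card * (oiRNum H + 2)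
          + (Finset.univ.filter (fun v => g v = 3)).card * (coverNum H + 3)} := by
  classical
  apply le_antisymm
  · apply le_csInf
    · refine ⟨_, fun _ => (3 : Fin 4), ?_, rfl⟩
      intro u v _ h
      have h3 : (3 : Fin 4) ≠ 0 := by decide
      exact absurd h h3
    · rintro w ⟨g, hg, rfl⟩
      exact directionA G H hH g hg
  · obtain ⟨F, hF, hsum⟩ := exists_oidr (corona G H)
    have hval : ∀ v, F (Sum.inl v) < 4 := fun v => Nat.lt_succ_of_le (hF.1 _)
    set g : V → Fin 4 := fun v => ⟨F (Sum.inl v), hval v⟩ with hgdef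
    have hgv : ∀ v, (g v : ℕ) = F (Sum.inl v) := fun v => rfl
    have hgind : ∀ u v, G.Adj u v → g u = 0 → g v ≠ 0 := by
      intro u v hadj h0 h1
      have h0' : F (Sum.inl u) = 0 := by rw [← hgv u, h0]; rfl
      have h1' : F (Sum.inl v) = 0 := by rw [← hgv v, h1]; rfl
      exact hF.2.2.2 _ _ ((corona_adj_inl_inl G H).mpr hadj) h0' h1'
    refine le_trans (Nat.sInf_le ⟨g, hgind, rfl⟩) ?_
    set h : Fin 4 → ℕ :=
      ![Fintype.card W + domNum H, oidRNum H + 1, oiRNum H + 2, coverNum H + 3] with hhdef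
    have hexpr :
        (Finset.univ.filter (fun v => g v = 0)).card * (Fintype.card W + domNum H)
          + (Finset.univ.filter (fun v => g v = 1)).card * (oidRNum H + 1)
          + (Finset.univ.filter (fun v => g v = 2)).card * (oiRNum H + 2)
          + (Finset.univ.filter (fun v => g v = 3)).card * (coverNum H + 3)
        = ∑ v, h (g v) := (sum_fin4 g h).symm
    rw [hexpr, hsum, Fintype.sum_sum_type, Fintype.sum_prod_type,
      ← Finset.sum_add_distrib]
    apply Finset.sum_le_sum
    intro v _
    rcases fin4_cases (g v) with hc | hc | hc | hc <;> rw [hc] <;>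
      [skip; skip; skip; skip]
    · have hFv : F (Sum.inl v) = 0 := by rw [← hgv v, hc]; rfl
      have := copyB0 G H hF v hFv
      have hh : h 0 = Fintype.card W + domNum H := rfl
      rw [hh]; omega
    · have hFv : F (Sum.inl v) = 1 := by rw [← hgv v, hc]; rfl
      have := copyB1 G H hF v hFv
      have hh : h 1 = oidRNum H + 1 := rfl
      rw [hh]; omega
    · have hFv : F (Sum.inl v) = 2 := by rw [← hgv v, hc]; rfl
      have := copyB2 G H hF v hFv
      have hh : h 2 = oiRNum H + 2 := rfl
      rw [hh]; omega
    · have hFv : F (Sum.inl v) = 3 := by rw [← hgv v, hc]; rfl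
      have := copyB3 G H hF v
      have hh : h 3 = coverNum H + 3 := rfl
      rw [hh]; omega
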